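/- Suppose k^2 < 2n and define Wg as the series Wg(π) = n^{-k} Σ_{r≥0} (-1)^r c_r(π)/n^r with c_r(π) counting ordered factorizations of π into r transpositions (s_1 t_1)⋯(s_r t_r) with s_i < t_i and t_1 ≤ ⋯ ≤ t_r. Then |Wg(id)| ≤ 1/n^k + (k^2/(2 n^{k+2})) · 1/(1 - k^4/(4n^2)). -/

import Mathlib

/-- Minimal number of transpositions needed to write a permutation. -/
noncomputable def transLen {α : Type*} [DecidableEq α] (π : Equiv.Perm α) : ℕ :=
  sInf {r | ∃ l : List (Equiv.Perm α), l.length = r ∧ (∀ τ ∈ l, τ.IsSwap) ∧ l.prod = π}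

/-- Number of sequences `(s₁,…,s_r,t₁,…,t_r)` with `sᵢ < tᵢ`, `t₁ ≤ ⋯ ≤ t_r` and
`π = (s₁ t₁)⋯(s_r t_r)`. -/
noncomputable def factorCount (k r : ℕ) (π : Equiv.Perm (Fin k)) : ℕ :=
  Nat.card {p : Fin r → Fin k × Fin k //
    (∀ i, (p i).1 < (p i).2) ∧
    (∀ i j : Fin r, i ≤ j → (p i).2 ≤ (p j).2) ∧
    (List.ofFn fun i => Equiv.swap (p i).1 (p i).2).prod = π}

/-- The Weingarten function `Wg(π) = n^{-k} Σ_{r≥0} (-1)^r c_r(π)/n^r`. -/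
noncomputable def Wg (n k : ℕ) (π : Equiv.Perm (Fin k)) : ℝ :=
  (1 / (n : ℝ) ^ k) * ∑' r : ℕ, (-1 : ℝ) ^ r * (factorCount k r π : ℝ) / (n : ℝ) ^ r

lemma factorCount_zero (k : ℕ) : factorCount k 0 1 = 1 := by
  rw [factorCount]
  have : Unique {p : Fin 0 → Fin k × Fin k //
      (∀ i, (p i).1 < (p i).2) ∧
      (∀ i j : Fin 0, i ≤ j → (p i).2 ≤ (p j).2) ∧
      (List.ofFn fun i => Equiv.swap (p i).1 (p i).2).prod = 1} := by
    refine ⟨⟨⟨Fin.elim0, fun i => i.elim0, fun i => i.elim0, by simp⟩⟩, ?_⟩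
    rintro ⟨p, hp⟩
    apply Subtype.ext
    funext i
    exact i.elim0
  exact Nat.card_unique

lemma factorCount_odd (k r : ℕ) (hr : Odd r) : factorCount k r 1 = 0 := by
  rw [factorCount, Nat.card_eq_zero]
  left
  rw [isEmpty_subtype]
  rintro p ⟨h1, h2, h3⟩
  have hs : Equiv.Perm.sign ((List.ofFn fun i => Equiv.swap (p i).1 (p i).2).prod) =
      (-1) ^ (List.ofFn fun i : Fin r => Equiv.swap (p i).1 (p i).2).length := by
    apply Equiv.Perm.sign_prod_list_swap
    intro g hg
    rw [List.mem_ofFn] at hg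
    obtain ⟨i, rfl⟩ := hg
    exact ⟨_, _, (h1 i).ne, rfl⟩
  rw [h3, List.length_ofFn, map_one, hr.neg_one_pow] at hs
  exact absurd hs (by decide)

lemma swap_lt_inj {k : ℕ} {a b c d : Fin k} (hab : a < b) (hcd : c < d)
    (h : Equiv.swap a b = Equiv.swap c d) : a = c ∧ b = d := by
  have h1 : Equiv.swap c d a = b := by rw [← h]; exact Equiv.swap_apply_left a b
  rcases eq_or_ne a c with rfl | hac
  · refine ⟨rfl, ?_⟩
    rw [Equiv.swap_apply_left] at h1
    exact h1.symm
  · rcases eq_or_ne a d with rfl | had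
    · rw [Equiv.swap_apply_right] at h1
      exact absurd (hcd.trans hab) (by rw [h1]; exact lt_irrefl _)
    · rw [Equiv.swap_apply_of_ne_of_ne hac had] at h1
      exact absurd hab (by rw [h1]; exact lt_irrefl _)

lemma factorCount_succ_le (k m : ℕ) :
    factorCount k (m + 1) 1 ≤ (Nat.card {q : Fin k × Fin k // q.1 < q.2}) ^ m := by
  classical
  have key : factorCount k (m+1) 1 ≤ Nat.card (Fin m → {q : Fin k × Fin k // q.1 < q.2}) := by
    rw [factorCount]
    apply Nat.card_le_card_of_injective
      (f := fun p => fun i : Fin m => (⟨p.1 i.succ, p.2.1 i.succ⟩ :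
        {q : Fin k × Fin k // q.1 < q.2}))
    rintro ⟨p, hp1, hp2, hp3⟩ ⟨q, hq1, hq2, hq3⟩ hpq
    have htail : ∀ i : Fin m, p i.succ = q i.succ := by
      intro i
      exact congrArg Subtype.val (congrFun hpq i)
    have hprod : (List.ofFn fun i : Fin m => Equiv.swap (p i.succ).1 (p i.succ).2).prod =
        (List.ofFn fun i : Fin m => Equiv.swap (q i.succ).1 (q i.succ).2).prod := by
      have hfe : (fun i : Fin m => Equiv.swap (p i.succ).1 (p i.succ).2) =
          fun i : Fin m => Equiv.swap (q i.succ).1 (q i.succ).2 :=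
        funext fun i => by rw [htail]
      rw [hfe]
    have h0 : Equiv.swap (p 0).1 (p 0).2 = Equiv.swap (q 0).1 (q 0).2 := by
      have hp' := hp3
      have hq' := hq3
      rw [List.ofFn_succ] at hp' hq'
      simp only [List.prod_cons] at hp' hq'
      have := hp'.trans hq'.symm
      rw [hprod] at this
      exact mul_right_cancel this
    have h00 : p 0 = q 0 := by
      have := swap_lt_inj (hp1 0) (hq1 0) h0
      exact Prod.ext this.1 this.2
    apply Subtype.ext
    funext i
    refine Fin.cases h00 (fun j => htail j) i
  calc factorCount k (m+1) 1 ≤ _ := key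
    _ = _ := by rw [Nat.card_fun, Nat.card_eq_fintype_card (α := Fin m), Fintype.card_fin]

lemma two_mul_card_pairs_le (k : ℕ) :
    2 * Nat.card {q : Fin k × Fin k // q.1 < q.2} ≤ k ^ 2 := by
  classical
  have e : {q : Fin k × Fin k // q.1 < q.2} ≃ {q : Fin k × Fin k // q.2 < q.1} :=
    Equiv.subtypeEquiv (Equiv.prodComm (Fin k) (Fin k)) (fun q => by simp)
  rw [Nat.card_eq_fintype_card]
  have hlt := Fintype.card_congr e
  have h1 : Fintype.card {q : Fin k × Fin k // q.1 < q.2} =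
      (Finset.univ.filter fun q : Fin k × Fin k => q.1 < q.2).card :=
    Fintype.card_subtype _
  have h2 : Fintype.card {q : Fin k × Fin k // q.2 < q.1} =
      (Finset.univ.filter fun q : Fin k × Fin k => q.2 < q.1).card :=
    Fintype.card_subtype _
  have hdisj : Disjoint (Finset.univ.filter fun q : Fin k × Fin k => q.1 < q.2)
      (Finset.univ.filter fun q : Fin k × Fin k => q.2 < q.1) := by
    rw [Finset.disjoint_filter]
    intro q _ hq hq'
    exact absurd (hq.trans hq') (lt_irrefl _)
  calc 2 * Fintype.card {q : Fin k × Fin k // q.1 < q.2}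
      = (Finset.univ.filter fun q : Fin k × Fin k => q.1 < q.2).card +
        (Finset.univ.filter fun q : Fin k × Fin k => q.2 < q.1).card := by
        rw [← h1, ← h2, ← hlt]; ring
    _ = ((Finset.univ.filter fun q : Fin k × Fin k => q.1 < q.2) ∪
        (Finset.univ.filter fun q : Fin k × Fin k => q.2 < q.1)).card :=
        (Finset.card_union_of_disjoint hdisj).symm
    _ ≤ (Finset.univ : Finset (Fin k × Fin k)).card := Finset.card_le_card (Finset.subset_univ _)
    _ = k ^ 2 := by simp [sq]


lemma geom_aux (x y : ℝ) (j : ℕ) :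
    (x / y ^ 2) * ((x ^ 2 / y ^ 2) ^ j) = x ^ (2 * j + 1) / y ^ (2 * j + 1 + 1) := by
  rw [div_pow, div_mul_div_comm, ← pow_mul, ← pow_mul, ← pow_succ', ← pow_add,
    show 2 + 2 * j = 2 * j + 1 + 1 by omega]

set_option maxHeartbeats 1000000 in
theorem stmt8 (n k : ℕ) (hn : 0 < n) (hk : 0 < k) (h : k ^ 2 < 2 * n) :
    |Wg n k 1| ≤ 1 / (n : ℝ) ^ k +
      ((k : ℝ) ^ 2 / (2 * (n : ℝ) ^ (k + 2))) * (1 / (1 - (k : ℝ) ^ 4 / (4 * (n : ℝ) ^ 2))) := by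
  set N : ℝ := (n : ℝ) with hNdef
  set K : ℝ := (k : ℝ) with hKdef
  have hN : 0 < N := by rw [hNdef]; exact_mod_cast hn
  have hK : 0 < K := by rw [hKdef]; exact_mod_cast hk
  have hKN : K ^ 2 / 2 < N := by
    have : (k : ℝ) ^ 2 < 2 * (n : ℝ) := by exact_mod_cast h
    linarith
  -- bound on factorCount
  have hC : ((Nat.card {q : Fin k × Fin k // q.1 < q.2}) : ℝ) ≤ K ^ 2 / 2 := by
    have := two_mul_card_pairs_le k
    have h2 : (2 * Nat.card {q : Fin k × Fin k // q.1 < q.2} : ℝ) ≤ (k : ℝ) ^ 2 := by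
      exact_mod_cast this
    push_cast at h2
    linarith
  have hfc : ∀ m : ℕ, ((factorCount k (m + 1) 1 : ℝ)) ≤ (K ^ 2 / 2) ^ m := by
    intro m
    calc ((factorCount k (m + 1) 1 : ℝ))
        ≤ ((Nat.card {q : Fin k × Fin k // q.1 < q.2} : ℝ)) ^ m := by
          exact_mod_cast factorCount_succ_le k m
      _ ≤ (K ^ 2 / 2) ^ m := pow_le_pow_left₀ (by positivity) hC m
  set g : ℕ → ℝ := fun r => (factorCount k r 1 : ℝ) / N ^ r with hgdef
  have hgnn : ∀ r, 0 ≤ g r := fun r => by positivity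
  have hg0 : g 0 = 1 := by simp [hgdef, factorCount_zero]
  set ρ : ℝ := K ^ 2 / (2 * N) with hρdef
  have hρ0 : 0 ≤ ρ := by positivity
  have hρ1 : ρ < 1 := by
    rw [hρdef, div_lt_one (by positivity)]
    linarith
  have hgle : ∀ m, g (m + 1) ≤ (1 / N) * ρ ^ m := by
    intro m
    have heq : (1 / N) * ρ ^ m = (K ^ 2 / 2) ^ m / N ^ (m + 1) := by
      rw [hρdef]
      rw [div_pow, div_pow, mul_pow, pow_succ]
      field_simp
      ring
    rw [heq]
    show ((factorCount k (m + 1) 1 : ℝ)) / N ^ (m + 1) ≤ (K ^ 2 / 2) ^ m / N ^ (m + 1)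
    gcongr
    exact hfc m
  have hsum1 : Summable (fun m => g (m + 1)) :=
    Summable.of_nonneg_of_le (fun m => hgnn _) hgle
      ((summable_geometric_of_lt_one hρ0 hρ1).mul_left (1 / N))
  have hsumg : Summable g := (summable_nat_add_iff 1).mp hsum1
  set f : ℕ → ℝ := fun r => (-1 : ℝ) ^ r * (factorCount k r 1 : ℝ) / N ^ r with hfdef
  have habs : ∀ r, |f r| = g r := by
    intro r
    rw [hfdef, hgdef]
    simp only [abs_div, abs_mul, abs_pow, abs_neg, abs_one, one_pow, one_mul,
      Nat.abs_cast, abs_of_nonneg hN.le]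
  have hsumabs : Summable (fun r => |f r|) := hsumg.congr (fun r => (habs r).symm)
  have hsumf : Summable f := hsumabs.of_abs
  -- odd terms vanish
  have hodd : ∀ j : ℕ, g (2 * j + 1) = 0 := by
    intro j
    rw [hgdef]
    simp [factorCount_odd k (2 * j + 1) ⟨j, by ring⟩]
  set q : ℝ := K ^ 4 / (4 * N ^ 2) with hqdef
  have hq0 : 0 ≤ q := by positivity
  have hq1 : q < 1 := by
    rw [hqdef, div_lt_one (by positivity)]
    nlinarith [sq_nonneg K, hKN, hN]
  have ho : Summable (fun j => g (2 * j + 1 + 1)) :=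
    hsum1.comp_injective (fun a b hab => by omega)
  have he : Summable (fun j => g (2 * j + 1)) := by
    apply summable_zero.congr
    intro j
    rw [hodd j]
  have hsplit : (∑' j, g (2 * j + 1)) + (∑' j, g (2 * j + 1 + 1)) = ∑' m, g (m + 1) :=
    tsum_even_add_odd (f := fun m => g (m + 1)) he ho
  have hzero : (∑' j, g (2 * j + 1)) = 0 := by
    rw [show (fun j : ℕ => g (2 * j + 1)) = fun _ => (0 : ℝ) from
      funext fun j => hodd j]
    exact tsum_zero
  have hgeom : Summable (fun j : ℕ => (K ^ 2 / (2 * N ^ 2)) * q ^ j) :=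
    (summable_geometric_of_lt_one hq0 hq1).mul_left _
  have hS : (∑' j, g (2 * j + 1 + 1)) ≤ (K ^ 2 / (2 * N ^ 2)) * (1 - q)⁻¹ := by
    have hterm : ∀ j : ℕ, g (2 * j + 1 + 1) ≤ (K ^ 2 / (2 * N ^ 2)) * q ^ j := by
      intro j
      have heq : (K ^ 2 / (2 * N ^ 2)) * q ^ j = (K ^ 2 / 2) ^ (2 * j + 1) / N ^ (2 * j + 1 + 1) := by
        rw [hqdef, show K ^ 2 / (2 * N ^ 2) = (K ^ 2 / 2) / N ^ 2 by ring,
          show K ^ 4 / (4 * N ^ 2) = (K ^ 2 / 2) ^ 2 / N ^ 2 by ring, geom_aux]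
      rw [heq]
      show ((factorCount k (2 * j + 1 + 1) 1 : ℝ)) / N ^ (2 * j + 1 + 1) ≤
        (K ^ 2 / 2) ^ (2 * j + 1) / N ^ (2 * j + 1 + 1)
      gcongr
      exact hfc (2 * j + 1)
    calc (∑' j, g (2 * j + 1 + 1)) ≤ ∑' j, (K ^ 2 / (2 * N ^ 2)) * q ^ j :=
          Summable.tsum_le_tsum hterm ho hgeom
      _ = (K ^ 2 / (2 * N ^ 2)) * (1 - q)⁻¹ := by
          rw [tsum_mul_left, tsum_geometric_of_lt_one hq0 hq1]
  have htail : (∑' m, g (m + 1)) ≤ (K ^ 2 / (2 * N ^ 2)) * (1 - q)⁻¹ := by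
    rw [← hsplit, hzero, zero_add]
    exact hS
  have htsumg : ∑' r, g r = 1 + ∑' m, g (m + 1) := by
    rw [Summable.tsum_eq_zero_add hsumg, hg0]
  have habs_tsum : |∑' r, f r| ≤ ∑' r, g r := by
    have := norm_tsum_le_tsum_norm (f := f) (by simpa only [Real.norm_eq_abs] using hsumabs)
    simpa only [Real.norm_eq_abs, habs] using this
  have hWg : Wg n k 1 = (1 / N ^ k) * ∑' r, f r := rfl
  rw [hWg, abs_mul, abs_of_nonneg (by positivity : (0:ℝ) ≤ 1 / N ^ k)]
  have hstep : (1 / N ^ k) * |∑' r, f r| ≤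
      (1 / N ^ k) * (1 + (K ^ 2 / (2 * N ^ 2)) * (1 - q)⁻¹) := by
    apply mul_le_mul_of_nonneg_left _ (by positivity)
    calc |∑' r, f r| ≤ ∑' r, g r := habs_tsum
      _ = 1 + ∑' m, g (m + 1) := htsumg
      _ ≤ 1 + (K ^ 2 / (2 * N ^ 2)) * (1 - q)⁻¹ := by linarith
  refine hstep.trans (le_of_eq ?_)
  have h1 : (1:ℝ) / N ^ k * (K ^ 2 / (2 * N ^ 2)) = K ^ 2 / (2 * N ^ (k + 2)) := by
    rw [pow_add]
    have hNk : N ^ k ≠ 0 := by positivity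
    field_simp
  calc 1 / N ^ k * (1 + K ^ 2 / (2 * N ^ 2) * (1 - q)⁻¹)
      = 1 / N ^ k + (1 / N ^ k * (K ^ 2 / (2 * N ^ 2))) * (1 - q)⁻¹ := by ring
    _ = 1 / N ^ k + (K ^ 2 / (2 * N ^ (k + 2))) * (1 / (1 - q)) := by rw [h1, one_div (1 - q)]
    _ = _ := by rw [hqdef]
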